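/- Let (ν_t)_{t∈[0,T]} be an adapted M_+(E)-valued process on a filtered probability space with ν_0 deterministic, such that for every φ ∈ C(E) the process t ↦ ⟨φ, ν_t⟩ is a martingale. Then for every t ∈ [0,T], almost surely supp(ν_t) ⊆ supp(ν_0). -/

import Mathlib

open MeasureTheory Set Filter

noncomputable section

/-- `M₊(E)`: finite non-negative Borel measures on `E = [0,T]`, with the weak topology. -/
abbrev MV (T : ℝ) := MeasureTheory.FiniteMeasure (Set.Icc (0:ℝ) T)

/-- `⟨φ, ν⟩ = ∫_E φ(x) ν(dx)`. -/
def pairF {T : ℝ} (φ : ℝ → ℝ) (ν : MV T) : ℝ :=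
  ∫ x, φ (x : ℝ) ∂(ν : Measure (Set.Icc (0:ℝ) T))

/-- `φ ∈ D₁`: (the restriction to `E` of) a smooth function on `ℝ` with `φ'(0) = 0`. -/
def memD1 (φ : ℝ → ℝ) : Prop := ContDiff ℝ (⊤ : ℕ∞) φ ∧ deriv φ 0 = 0

/-- A real-valued martingale on the time interval `[a,b]` w.r.t. filtration `ℱ` and measure `Q`. -/
def IsMartOn {Ω : Type*} {m0 : MeasurableSpace Ω} (ℱ : MeasureTheory.Filtration ℝ m0)
    (Q : MeasureTheory.Measure Ω) (a b : ℝ) (X : ℝ → Ω → ℝ) : Prop :=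
  (∀ t ∈ Set.Icc a b,
      MeasureTheory.Integrable (X t) Q ∧ StronglyMeasurable[ℱ t] (X t)) ∧
  ∀ s t, s ∈ Set.Icc a b → t ∈ Set.Icc a b → s ≤ t → Q[X t | ℱ s] =ᵐ[Q] X s

/-- A real-valued local martingale on `[a,b]`: there are stopping times increasing a.s. to `b`
such that each stopped process is a martingale on `[a,b]`. -/
def IsLocalMartOn {Ω : Type*} {m0 : MeasurableSpace Ω} (ℱ : MeasureTheory.Filtration ℝ m0)
    (Q : MeasureTheory.Measure Ω) (a b : ℝ) (X : ℝ → Ω → ℝ) : Prop :=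
  ∃ τ : ℕ → Ω → ℝ,
    (∀ n, MeasureTheory.IsStoppingTime ℱ (fun ω => (τ n ω : WithTop ℝ))) ∧
    (∀ᵐ ω ∂Q, Monotone (fun n => τ n ω) ∧
      Filter.Tendsto (fun n => τ n ω) Filter.atTop (nhds b)) ∧
    ∀ n, IsMartOn ℱ Q a b (fun t ω => X (min t (τ n ω)) ω)

/-- The HJM drift condition: for all `φ ∈ D₁`, `⟨φ, μ_t⟩ + ∫_0^t ⟨φ', μ_s⟩ ds`
is a local martingale on `[0,T]`. -/
def HJMdrift {T : ℝ} {Ω : Type*} {m0 : MeasurableSpace Ω} (ℱ : MeasureTheory.Filtration ℝ m0)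
    (Q : MeasureTheory.Measure Ω) (μ : ℝ → Ω → MV T) : Prop :=
  ∀ φ : ℝ → ℝ, memD1 φ →
    IsLocalMartOn ℱ Q 0 T (fun t ω =>
      pairF φ (μ t ω) + ∫ s in (0:ℝ)..t, pairF (deriv φ) (μ s ω))

/-- Topological support of a measure: points all of whose open neighbourhoods have
positive measure. -/
def msupport {X : Type*} [TopologicalSpace X] [MeasurableSpace X]
    (μ : MeasureTheory.Measure X) : Set X :=
  {x | ∀ U : Set X, IsOpen U → x ∈ U → 0 < μ U}

/-- **Support stability for measure-valued martingales.** If `(ν_t)` is an adapted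
`M₊(E)`-valued process with deterministic `ν_0` such that `⟨φ, ν_t⟩` is a martingale for
every `φ ∈ C(E)`, then for every `t ∈ [0,T]`, almost surely `supp(ν_t) ⊆ supp(ν_0)`. -/
theorem stmt12 {T : ℝ} (hT : 0 < T)
    {Ω : Type*} {m0 : MeasurableSpace Ω} (ℱ : Filtration ℝ m0)
    (Q : Measure Ω) [IsProbabilityMeasure Q]
    (ν : ℝ → Ω → MV T)
    (hadapted : ∀ t : ℝ, ∀ s : Set (Icc (0:ℝ) T), MeasurableSet s →
      Measurable[ℱ t] (fun ω => (ν t ω : Measure (Icc (0:ℝ) T)) s))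
    (ν₀ : MV T) (hν₀ : ∀ ω, ν 0 ω = ν₀)
    (hmart : ∀ φ : ℝ → ℝ, ContinuousOn φ (Icc (0:ℝ) T) →
      IsMartOn ℱ Q 0 T (fun t ω => pairF φ (ν t ω))) :
    ∀ t ∈ Icc (0:ℝ) T, ∀ᵐ ω ∂Q,
      msupport ((ν t ω : Measure (Icc (0:ℝ) T)))
        ⊆ msupport ((ν₀ : Measure (Icc (0:ℝ) T))) := by
  intro t ht
  classical
  set S : Set (Icc (0:ℝ) T) := msupport ((ν₀ : Measure (Icc (0:ℝ) T))) with hSdef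
  set K : Set (Icc (0:ℝ) T) := Sᶜ with hKdef
  -- K is null for ν₀
  have hKnull : (ν₀ : Measure (Icc (0:ℝ) T)) K = 0 := by
    apply measure_null_of_locally_null
    intro x hx
    have hx' : ∃ U : Set (Icc (0:ℝ) T), IsOpen U ∧ x ∈ U ∧
        ¬ 0 < (ν₀ : Measure (Icc (0:ℝ) T)) U := by
      have : ¬ (∀ U : Set (Icc (0:ℝ) T), IsOpen U → x ∈ U →
          0 < (ν₀ : Measure (Icc (0:ℝ) T)) U) := hx
      push_neg at this
      obtain ⟨U, h1, h2, h3⟩ := this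
      exact ⟨U, h1, h2, not_lt.mpr h3⟩
    obtain ⟨U, hUopen, hxU, hU⟩ := hx'
    refine ⟨U, mem_nhdsWithin_of_mem_nhds (hUopen.mem_nhds hxU), ?_⟩
    exact le_zero_iff.mp (not_lt.mp hU)
  -- S' : the closed nonempty subset of ℝ
  set S' : Set ℝ := (Subtype.val '' S) ∪ {T + 1} with hS'def
  have hSclosed : IsClosed S := by
    rw [← isOpen_compl_iff]
    rw [isOpen_iff_forall_mem_open]
    intro x hx
    have hx' : ∃ U : Set (Icc (0:ℝ) T), IsOpen U ∧ x ∈ U ∧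
        ¬ 0 < (ν₀ : Measure (Icc (0:ℝ) T)) U := by
      have : ¬ (∀ U : Set (Icc (0:ℝ) T), IsOpen U → x ∈ U →
          0 < (ν₀ : Measure (Icc (0:ℝ) T)) U) := hx
      push_neg at this
      obtain ⟨U, h1, h2, h3⟩ := this
      exact ⟨U, h1, h2, not_lt.mpr h3⟩
    obtain ⟨U, hUopen, hxU, hU⟩ := hx'
    exact ⟨U, fun y hy hyS => hU (hyS U hUopen hy), hUopen, hxU⟩
  have hS'closed : IsClosed S' :=
    ((hSclosed.isCompact.image continuous_subtype_val).isClosed).union isClosed_singleton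
  have hS'ne : S'.Nonempty := ⟨T + 1, Or.inr rfl⟩
  set φ : ℝ → ℝ := fun y => Metric.infDist y S' with hφdef
  have hφcont : Continuous φ := Metric.continuous_infDist_pt S'
  have hφnn : ∀ y, 0 ≤ φ y := fun _ => Metric.infDist_nonneg
  have hφpos : ∀ x : Icc (0:ℝ) T, x ∈ K → 0 < φ (x : ℝ) := by
    intro x hx
    refine (hS'closed.notMem_iff_infDist_pos hS'ne).mp ?_
    rintro (⟨y, hyS, hyx⟩ | hx1)
    · exact hx (by rwa [← Subtype.coe_injective hyx])
    · have : (x : ℝ) ≤ T := x.2.2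
      simp only [mem_singleton_iff] at hx1
      linarith
  -- integrability of φ against any finite measure on Icc
  have hφint : ∀ (μ : Measure (Icc (0:ℝ) T)) [IsFiniteMeasure μ],
      Integrable (fun x : Icc (0:ℝ) T => φ (x : ℝ)) μ := by
    intro μ _
    have hc : Continuous (fun x : Icc (0:ℝ) T => φ (x : ℝ)) :=
      hφcont.comp continuous_subtype_val
    exact hc.integrable_of_hasCompactSupport
      (IsCompact.of_isClosed_subset isCompact_univ (isClosed_tsupport _) (subset_univ _))
  -- ⟨φ, ν₀⟩ = 0
  have hφν₀ : pairF φ ν₀ = 0 := by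
    apply integral_eq_zero_of_ae
    have hsub : {x : Icc (0:ℝ) T | ¬ φ (x : ℝ) = 0} ⊆ K := by
      intro x hx
      intro hxS
      exact hx (Metric.infDist_zero_of_mem (Or.inl ⟨x, hxS, rfl⟩))
    exact measure_mono_null hsub hKnull
  -- martingale property
  have hM := hmart φ hφcont.continuousOn
  have h0mem : (0:ℝ) ∈ Icc (0:ℝ) T := ⟨le_refl 0, hT.le⟩
  have hIntXt : Integrable (fun ω => pairF φ (ν t ω)) Q := (hM.1 t ht).1
  have hc := hM.2 0 t h0mem ht ht.1
  have h1 : ∫ ω, pairF φ (ν t ω) ∂Q = 0 := by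
    rw [← integral_condExp (ℱ.le 0) (f := fun ω => pairF φ (ν t ω)),
      integral_congr_ae hc]
    simp [hν₀, hφν₀]
  have h2 : ∀ᵐ ω ∂Q, pairF φ (ν t ω) = 0 := by
    have := (integral_eq_zero_iff_of_nonneg
      (fun ω => integral_nonneg fun x => hφnn _) hIntXt).mp h1
    filter_upwards [this] with ω hω using hω
  filter_upwards [h2] with ω hω
  have hνtK : (ν t ω : Measure (Icc (0:ℝ) T)) K = 0 := by
    have hzero := (integral_eq_zero_iff_of_nonneg (fun x => hφnn _)
      (hφint (ν t ω : Measure (Icc (0:ℝ) T)))).mp hω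
    refine measure_mono_null (fun x hx => ?_) (ae_iff.mp hzero)
    exact fun h0 => (hφpos x hx).ne' h0
  intro x hx
  by_contra hxS
  have hx' : ∃ U : Set (Icc (0:ℝ) T), IsOpen U ∧ x ∈ U ∧
      ¬ 0 < (ν₀ : Measure (Icc (0:ℝ) T)) U := by
    have : ¬ (∀ U : Set (Icc (0:ℝ) T), IsOpen U → x ∈ U →
        0 < (ν₀ : Measure (Icc (0:ℝ) T)) U) := hxS
    push_neg at this
    obtain ⟨U, h1', h2', h3'⟩ := this
    exact ⟨U, h1', h2', not_lt.mpr h3'⟩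
  obtain ⟨U, hUopen, hxU, hU⟩ := hx'
  have hUK : U ⊆ K := fun y hy hyS => hU (hyS U hUopen hy)
  have hpos := hx U hUopen hxU
  exact hpos.ne' (measure_mono_null hUK hνtK)
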